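/- Let l ≥ 1 and let m ≥ 1 be odd; work in R = F_2[x,y]/(x^l − 1, y^m − 1) with coefficient-vector identification R ≅ F_2^{lm}. Let c ∈ R satisfy c·χ = 0 where χ = Σ_{j=0}^{m−1} y^j, and let H ∈ F_2^{lm×2lm} be the matrix whose row indexed by a monomial α is the coefficient vector of (αc, αc^T) ∈ R ⊕ R. For i = 0,…,l−1 define the 2l vectors v_{U,i} = coefficient vector of (x^i χ, 0) and v_{D,i} = coefficient vector of (0, x^i χ) in F_2^{2lm}. Then: (i) H·v_{U,i} = 0 and H·v_{D,i} = 0 for all i (each such vector commutes with every X-check and, by self-duality, with every Z-check); (ii) the F_2 dot products satisfy v_{U,i}·v_{U,j} = δ_{ij}, v_{D,i}·v_{D,j} = δ_{ij}, and v_{U,i}·v_{D,j} = 0. Consequently the self-dual bivariate-bicycle code BB(c, c^T) encodes k = 2lm − 2·rank_{F_2}(H) ≥ 2l logical qubits, each of the 2l vectors represents a nontrivial logical operator of weight m, and the code distance satisfies d ≤ m. -/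

import Mathlib

open Matrix

/-- The check matrix of the self-dual bivariate-bicycle code `BB(c, cᵀ)` over
`R_{l,m} = F₂[x,y]/(xˡ-1, yᵐ-1) ≅ F₂^{ZMod l × ZMod m}`: the row indexed by the
monomial `α` is the coefficient vector of `(αc, αcᵀ)`, i.e. its entries are
`c(β - α)` on the left block and `cᵀ(β - α) = c(α - β)` on the right block. -/
def bbMat (l m : ℕ) (c : ZMod l × ZMod m → ZMod 2) :
    Matrix (ZMod l × ZMod m) ((ZMod l × ZMod m) ⊕ (ZMod l × ZMod m)) (ZMod 2) :=
  Matrix.of fun α => Sum.elim (fun β => c (β - α)) (fun β => c (α - β))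

/-- Coefficient vector of `(xⁱ χ, 0)` where `χ = Σ_{j<m} yʲ`. -/
def bbVU (l m : ℕ) (i : ZMod l) : ((ZMod l × ZMod m) ⊕ (ZMod l × ZMod m)) → ZMod 2 :=
  Sum.elim (fun β => if β.1 = i then 1 else 0) (fun _ => 0)

/-- Coefficient vector of `(0, xⁱ χ)` where `χ = Σ_{j<m} yʲ`. -/
def bbVD (l m : ℕ) (i : ZMod l) : ((ZMod l × ZMod m) ⊕ (ZMod l × ZMod m)) → ZMod 2 :=
  Sum.elim (fun _ => 0) (fun β => if β.1 = i then 1 else 0)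

section aux
variable {l m : ℕ} [NeZero l] [NeZero m]

lemma bb_sum_dotP {ι n : Type*} [Fintype ι] [Fintype n] (f : ι → n → ZMod 2) (v : n → ZMod 2) :
    (∑ i, f i) ⬝ᵥ v = ∑ i, f i ⬝ᵥ v := by
  simp only [dotProduct, Finset.sum_apply, Finset.sum_mul]
  exact Finset.sum_comm

lemma bb_chi_sum (hm : Odd m) (i : ZMod l) :
    ∑ β : ZMod l × ZMod m, (if β.1 = i then (1 : ZMod 2) else 0) = 1 := by
  rw [Fintype.sum_prod_type]
  have h1 : ∀ a : ZMod l, (∑ _b : ZMod m, (if a = i then (1 : ZMod 2) else 0))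
      = if a = i then (m : ZMod 2) else 0 := by
    intro a
    by_cases h : a = i <;> simp [h, Finset.sum_const, ZMod.card, nsmul_eq_mul]
  simp only [h1]
  rw [Finset.sum_ite_eq' Finset.univ i fun _ => (m : ZMod 2)]
  simp only [Finset.mem_univ, if_true]
  rw [← ZMod.natCast_mod m 2, Nat.odd_iff.mp hm, Nat.cast_one]

lemma bb_kerU (c : ZMod l × ZMod m → ZMod 2)
    (hc : ∀ a : ZMod l × ZMod m,
      (∑ b : ZMod l × ZMod m, c b * (if (a - b).1 = 0 then (1 : ZMod 2) else 0)) = 0)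
    (i : ZMod l) : (bbMat l m c).mulVec (bbVU l m i) = 0 := by
  funext α
  have key : (∑ β : ZMod l × ZMod m, c (β - α) * (if β.1 = i then (1 : ZMod 2) else 0)) = 0 := by
    rw [Fintype.sum_equiv (Equiv.subRight α)
      (fun β => c (β - α) * (if β.1 = i then (1 : ZMod 2) else 0))
      (fun b => c b * (if (((i - α.1, (0 : ZMod m)) : ZMod l × ZMod m) - b).1 = 0 then (1 : ZMod 2) else 0))
      ?_]
    · exact hc _
    · intro β
      simp only [Equiv.subRight_apply]
      congr 1
      have hcond : ((((i - α.1, (0 : ZMod m)) : ZMod l × ZMod m) - (β - α)).1 = 0) ↔ (β.1 = i) := by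
        simp only [Prod.sub_def, sub_eq_zero, sub_left_inj]
        exact eq_comm
      exact if_congr hcond.symm rfl rfl
  simp only [Matrix.mulVec, dotProduct, bbMat, bbVU, Matrix.of_apply,
    Fintype.sum_sum_type, Sum.elim_inl, Sum.elim_inr, mul_zero, Finset.sum_const_zero,
    add_zero, Pi.zero_apply]
  exact key

lemma bb_kerD (c : ZMod l × ZMod m → ZMod 2)
    (hc : ∀ a : ZMod l × ZMod m,
      (∑ b : ZMod l × ZMod m, c b * (if (a - b).1 = 0 then (1 : ZMod 2) else 0)) = 0)
    (i : ZMod l) : (bbMat l m c).mulVec (bbVD l m i) = 0 := by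
  funext α
  have key : (∑ β : ZMod l × ZMod m, c (α - β) * (if β.1 = i then (1 : ZMod 2) else 0)) = 0 := by
    rw [Fintype.sum_equiv (Equiv.subLeft α)
      (fun β => c (α - β) * (if β.1 = i then (1 : ZMod 2) else 0))
      (fun b => c b * (if (((α.1 - i, (0 : ZMod m)) : ZMod l × ZMod m) - b).1 = 0 then (1 : ZMod 2) else 0))
      ?_]
    · exact hc _
    · intro β
      simp only [Equiv.subLeft_apply]
      congr 1
      have hcond : ((((α.1 - i, (0 : ZMod m)) : ZMod l × ZMod m) - (α - β)).1 = 0) ↔ (β.1 = i) := by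
        simp only [Prod.sub_def, sub_eq_zero, sub_right_inj]
        exact eq_comm
      exact if_congr hcond.symm rfl rfl
  simp only [Matrix.mulVec, dotProduct, bbMat, bbVD, Matrix.of_apply,
    Fintype.sum_sum_type, Sum.elim_inl, Sum.elim_inr, mul_zero, Finset.sum_const_zero,
    zero_add, Pi.zero_apply]
  exact key

lemma bb_UU (hm : Odd m) (i j : ZMod l) :
    (∑ q, bbVU l m i q * bbVU l m j q) = (if i = j then (1 : ZMod 2) else 0) := by
  simp only [bbVU, Fintype.sum_sum_type, Sum.elim_inl, Sum.elim_inr, mul_zero,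
    Finset.sum_const_zero, add_zero]
  by_cases hij : i = j
  · subst hij
    simp only [if_pos rfl]
    have h1 : ∀ β : ZMod l × ZMod m,
        (if β.1 = i then (1 : ZMod 2) else 0) * (if β.1 = i then (1 : ZMod 2) else 0)
          = if β.1 = i then (1 : ZMod 2) else 0 := by
      intro β; split <;> simp
    simp only [h1]
    exact bb_chi_sum hm i
  · rw [if_neg hij]
    apply Finset.sum_eq_zero
    intro β _
    split_ifs with h1 h2 <;> simp_all

lemma bb_DD (hm : Odd m) (i j : ZMod l) :
    (∑ q, bbVD l m i q * bbVD l m j q) = (if i = j then (1 : ZMod 2) else 0) := by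
  have := bb_UU (l := l) hm i j
  simp only [bbVU, bbVD, Fintype.sum_sum_type, Sum.elim_inl, Sum.elim_inr, mul_zero, zero_mul,
    Finset.sum_const_zero, add_zero, zero_add] at this ⊢
  exact this

lemma bb_UD (i j : ZMod l) : (∑ q, bbVU l m i q * bbVD l m j q) = 0 := by
  simp [bbVU, bbVD, Fintype.sum_sum_type]

lemma bb_HHt (c : ZMod l × ZMod m → ZMod 2) :
    bbMat l m c * (bbMat l m c)ᵀ = 0 := by
  ext α α'
  simp only [Matrix.mul_apply, Matrix.transpose_apply, bbMat, Matrix.of_apply,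
    Fintype.sum_sum_type, Sum.elim_inl, Sum.elim_inr, Matrix.zero_apply]
  have : (∑ β : ZMod l × ZMod m, c (β - α) * c (β - α'))
      = ∑ β : ZMod l × ZMod m, c (α - β) * c (α' - β) := by
    apply Fintype.sum_equiv (Equiv.subLeft (α + α'))
    intro β
    simp only [Equiv.subLeft_apply]
    have h1 : α - (α + α' - β) = β - α' := by ring
    have h2 : α' - (α + α' - β) = β - α := by ring
    rw [h1, h2, mul_comm]
  rw [this, ← two_mul]
  simp [ZMod.natCast_self 2]
  left
  exact (by decide : (2 : ZMod 2) = 0)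

end aux

/-- **Disjoint logical basis of self-dual BB codes.**
Let `l ≥ 1`, `m ≥ 1` odd, and `c ∈ R_{l,m}` with `c·χ = 0` for `χ = Σ_j yʲ`.  Then the
`2l` coefficient vectors of `(xⁱχ, 0)` and `(0, xⁱχ)`: (i) are annihilated by the check
matrix `H` of `BB(c, cᵀ)`; (ii) are pairwise orthogonal with unit self inner products
(`δ_{ij}` pattern); consequently the code encodes `k = 2lm - 2·rank H ≥ 2l` logical
qubits, each of the `2l` vectors is a nontrivial logical operator of weight `m`, and the
code distance is at most `m`. -/
theorem stmt_11 (l m : ℕ) [NeZero l] [NeZero m] (hl : 1 ≤ l) (hm : Odd m)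
    (c : ZMod l × ZMod m → ZMod 2)
    (hc : ∀ a : ZMod l × ZMod m,
      (∑ b : ZMod l × ZMod m, c b * (if (a - b).1 = 0 then (1 : ZMod 2) else 0)) = 0) :
    (∀ i : ZMod l,
        (bbMat l m c).mulVec (bbVU l m i) = 0 ∧ (bbMat l m c).mulVec (bbVD l m i) = 0) ∧
    (∀ i j : ZMod l,
        (∑ q, bbVU l m i q * bbVU l m j q) = (if i = j then 1 else 0) ∧
        (∑ q, bbVD l m i q * bbVD l m j q) = (if i = j then 1 else 0) ∧
        (∑ q, bbVU l m i q * bbVD l m j q) = 0) ∧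
    2 * l ≤ 2 * (l * m) - 2 * (bbMat l m c).rank ∧
    (∀ i : ZMod l,
        hammingNorm (bbVU l m i) = m ∧ hammingNorm (bbVD l m i) = m ∧
        (¬ ∃ u, Matrix.vecMul u (bbMat l m c) = bbVU l m i) ∧
        (¬ ∃ u, Matrix.vecMul u (bbMat l m c) = bbVD l m i)) ∧
    sInf {w | ∃ v : ((ZMod l × ZMod m) ⊕ (ZMod l × ZMod m)) → ZMod 2,
        (bbMat l m c).mulVec v = 0 ∧
        (¬ ∃ u, Matrix.vecMul u (bbMat l m c) = v) ∧ hammingNorm v = w} ≤ m := by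
  set H := bbMat l m c with hH
  -- the combined family
  set b : (ZMod l ⊕ ZMod l) → ((ZMod l × ZMod m) ⊕ (ZMod l × ZMod m)) → ZMod 2 :=
    Sum.elim (bbVU l m) (bbVD l m) with hb
  have hker : ∀ s, H.mulVec (b s) = 0 := by
    rintro (i | i)
    · exact bb_kerU c hc i
    · exact bb_kerD c hc i
  have gram : ∀ s t, b s ⬝ᵥ b t = if s = t then (1 : ZMod 2) else 0 := by
    rintro (i | i) (j | j) <;>
      simp only [hb, Sum.elim_inl, Sum.elim_inr, Sum.inl.injEq, Sum.inr.injEq,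
        (by simp : (Sum.inl i = Sum.inr j) = False), (by simp : (Sum.inr i = Sum.inl j) = False),
        if_false]
    · exact bb_UU hm i j
    · exact bb_UD i j
    · rw [dotProduct_comm]; exact bb_UD j i
    · exact bb_DD hm i j
  -- nontriviality of each b s
  have hnt : ∀ s, ¬ ∃ u, Matrix.vecMul u H = b s := by
    intro s ⟨u, hu⟩
    have h1 : (Matrix.vecMul u H) ⬝ᵥ b s = 1 := by rw [hu, gram]; simp
    rw [← Matrix.dotProduct_mulVec, hker s, dotProduct_zero] at h1
    exact one_ne_zero (α := ZMod 2) h1.symm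
  -- hamming norms
  have hnormU : ∀ i, hammingNorm (bbVU l m i) = m := by
    intro i
    have hset : (Finset.univ.filter fun q => bbVU l m i q ≠ 0)
        = (Finset.univ.filter fun β : ZMod l × ZMod m => β.1 = i).map
            ⟨Sum.inl, Sum.inl_injective⟩ := by
      ext q
      cases q with
      | inl β => by_cases h : β.1 = i <;> simp [h] <;> simp [bbVU, h]
      | inr β => simp; simp [bbVU]
    have hcard : (Finset.univ.filter fun β : ZMod l × ZMod m => β.1 = i).card = m := by
      have : (Finset.univ.filter fun β : ZMod l × ZMod m => β.1 = i)
          = {i} ×ˢ Finset.univ := by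
        ext ⟨a, bb⟩; simp [eq_comm]
      rw [this, Finset.card_product, Finset.card_singleton, Finset.card_univ, ZMod.card,
        one_mul]
    rw [hammingNorm, hset, Finset.card_map, hcard]
  have hnormD : ∀ i, hammingNorm (bbVD l m i) = m := by
    intro i
    have hset : (Finset.univ.filter fun q => bbVD l m i q ≠ 0)
        = (Finset.univ.filter fun β : ZMod l × ZMod m => β.1 = i).map
            ⟨Sum.inr, Sum.inr_injective⟩ := by
      ext q
      cases q with
      | inl β => simp; simp [bbVD]
      | inr β => by_cases h : β.1 = i <;> simp [h] <;> simp [bbVD, h]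
    have hcard : (Finset.univ.filter fun β : ZMod l × ZMod m => β.1 = i).card = m := by
      have : (Finset.univ.filter fun β : ZMod l × ZMod m => β.1 = i)
          = {i} ×ˢ Finset.univ := by
        ext ⟨a, bb⟩; simp [eq_comm]
      rw [this, Finset.card_product, Finset.card_singleton, Finset.card_univ, ZMod.card,
        one_mul]
    rw [hammingNorm, hset, Finset.card_map, hcard]
  -- rank bound
  have hrank : 2 * l ≤ 2 * (l * m) - 2 * H.rank := by
    classical
    set K := LinearMap.ker H.mulVecLin with hK
    set R := LinearMap.range Hᵀ.mulVecLin with hR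
    set W := Submodule.span (ZMod 2) (Set.range b) with hW
    have hli : LinearIndependent (ZMod 2) b := by
      rw [Fintype.linearIndependent_iff]
      intro g hg t
      have h1 : (∑ s, g s • b s) ⬝ᵥ b t = 0 := by rw [hg, zero_dotProduct]
      rw [bb_sum_dotP] at h1
      simp only [smul_dotProduct, gram, smul_ite, smul_zero] at h1
      rw [Finset.sum_ite_eq' Finset.univ t] at h1
      simpa using h1
    have hWdim : Module.finrank (ZMod 2) W = 2 * l := by
      rw [hW, finrank_span_eq_card hli]
      simp [ZMod.card, two_mul]
    have hRdim : Module.finrank (ZMod 2) R = H.rank := by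
      rw [hR, ← Matrix.rank_transpose H]; rfl
    have hWK : W ≤ K := by
      rw [hW, Submodule.span_le]
      rintro v ⟨s, rfl⟩
      simp only [SetLike.mem_coe, LinearMap.mem_ker, Matrix.mulVecLin_apply]
      exact hker s
    have hRK : R ≤ K := by
      rintro v ⟨u, rfl⟩
      rw [hK, LinearMap.mem_ker, Matrix.mulVecLin_apply, Matrix.mulVecLin_apply,
        Matrix.mulVec_mulVec, hH, bb_HHt, Matrix.zero_mulVec]
    have hRW : R ⊓ W = ⊥ := by
      rw [eq_bot_iff]
      rintro v ⟨hvR, hvW⟩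
      obtain ⟨u, hu⟩ := hvR
      obtain ⟨g, hg⟩ := (Submodule.mem_span_range_iff_exists_fun (ZMod 2)).mp hvW
      have hgz : ∀ t, g t = 0 := by
        intro t
        have h1 : v ⬝ᵥ b t = 0 := by
          rw [← hu]
          simp only [Matrix.mulVecLin_apply]
          rw [Matrix.mulVec_transpose, ← Matrix.dotProduct_mulVec, hker t,
            dotProduct_zero]
        rw [← hg, bb_sum_dotP] at h1
        simp only [smul_dotProduct, gram, smul_ite, smul_zero] at h1
        rw [Finset.sum_ite_eq' Finset.univ t] at h1
        simpa using h1
      have : v = 0 := by rw [← hg]; simp [hgz]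
      simp [this]
    have hsum : Module.finrank (ZMod 2) (R ⊔ W : Submodule (ZMod 2) _)
        = H.rank + 2 * l := by
      have := Submodule.finrank_sup_add_finrank_inf_eq R W
      rw [hRW] at this
      simpa [hRdim, hWdim] using this
    have hle : Module.finrank (ZMod 2) (R ⊔ W : Submodule (ZMod 2) _)
        ≤ Module.finrank (ZMod 2) K :=
      Submodule.finrank_mono (sup_le hRK hWK)
    have hrn : H.rank + Module.finrank (ZMod 2) K = l * m + l * m := by
      have h1 := LinearMap.finrank_range_add_finrank_ker H.mulVecLin
      rw [Module.finrank_fintype_fun_eq_card] at h1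
      have h2 : Fintype.card ((ZMod l × ZMod m) ⊕ (ZMod l × ZMod m)) = l * m + l * m := by
        simp [ZMod.card]
      rw [h2] at h1
      exact h1
    rw [hsum] at hle
    omega
  refine ⟨fun i => ⟨bb_kerU c hc i, bb_kerD c hc i⟩,
    fun i j => ⟨bb_UU hm i j, bb_DD hm i j, bb_UD i j⟩, hrank,
    fun i => ⟨hnormU i, hnormD i, hnt (Sum.inl i), hnt (Sum.inr i)⟩, ?_⟩
  exact Nat.sInf_le ⟨bbVU l m 0, bb_kerU c hc 0, hnt (Sum.inl 0), hnormU 0⟩
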